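/- Let (X, χ) be a deterministic reader–writer transition system over a state set 𝒮 in which there is no infinite chain c₀ → c₁ → c₂ → ⋯ of consecutive silent writer transitions. Then trace similarity coincides with trace equivalence: two readers p, q are related by the greatest trace simulation iff trc^r(p) = trc^r(q), and two writers c, d are related by the greatest trace simulation iff trc^w(c) = trc^w(d). -/

import Mathlib

/-! # Statement 4: trace similarity = trace equivalence for deterministic reader–writer systems without silent divergence -/
namespace RW

/-- A deterministic reader–writer transition system over a state set `S`:
`rstep p s = c` means `p,s → c`; `wstep c = .inl (d,s)` means `c →ˢ d`;
`wstep c = .inr (.inl d)` means `c → d`; `wstep c = .inr (.inr s)` means `c ↓ s`. -/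
structure DRW (S : Type) where
  Rd : Type
  Wr : Type
  rstep : Rd → S → Wr
  wstep : Wr → (Wr × S) ⊕ (Wr ⊕ S)

variable {S : Type}

/-- The output transition `c →ˢ d`. -/
def OutTr (M : DRW S) (c : M.Wr) (s : S) (d : M.Wr) : Prop := M.wstep c = .inl (d, s)

/-- The silent transition `c → d`. -/
def TauTr (M : DRW S) (c d : M.Wr) : Prop := M.wstep c = .inr (.inl d)

/-- The termination transition `c ↓ s`. -/
def DownTr (M : DRW S) (c : M.Wr) (s : S) : Prop := M.wstep c = .inr (.inr s)

/-- The weak silent transition `c ⇒ d`: a finite chain of silent steps. -/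
def WSil (M : DRW S) : M.Wr → M.Wr → Prop := Relation.ReflTransGen (TauTr M)

/-- The weak output transition `c ⇒ˢ d`: `c ⇒ c' →ˢ d` for some `c'`. -/
def WOut (M : DRW S) (c : M.Wr) (s : S) (d : M.Wr) : Prop :=
  ∃ c', WSil M c c' ∧ OutTr M c' s d

/-- The weak termination transition `c ⇓ s`: `c ⇒ c' ↓ s` for some `c'`. -/
def WDone (M : DRW S) (c : M.Wr) (s : S) : Prop :=
  ∃ c', WSil M c c' ∧ DownTr M c' s

/-- `ReachL M c l d`: from `c` there is a chain of weak output transitions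
producing the list `l` of states and ending in `d`. -/
def ReachL (M : DRW S) : M.Wr → List S → M.Wr → Prop
  | c, [], d => c = d
  | c, s :: l, d => ∃ c', WOut M c s c' ∧ ReachL M c' l d

/-- `TrcEntry M c n v` holds iff the `n`-th entry (0-indexed) of the trace
`trc^w(c)` is `v`, where `v = .inl s` tags an intermediate output state and
`v = .inr s` tags the final state of a finite trace. -/
def TrcEntry (M : DRW S) (c : M.Wr) (n : ℕ) (v : S ⊕ S) : Prop :=
  (∃ l d s d', ReachL M c l d ∧ l.length = n ∧ WOut M d s d' ∧ v = .inl s) ∨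
  (∃ l d s, ReachL M c l d ∧ l.length = n ∧ WDone M d s ∧ v = .inr s)

open Classical in
/-- The writer trace map `trc^w : X_w → 𝒮^∞`, with a (nonempty, finite or infinite)
trace encoded as a function `ℕ → Option (S ⊕ S)`: a finite trace `(s₁,…,sₙ,s)`
sends `0,…,n-1` to `some (.inl sᵢ₊₁)`, `n` to `some (.inr s)` and all larger
numbers to `none`; an infinite trace `(s₁,s₂,…)` sends each `n` to
`some (.inl sₙ₊₁)`. -/
noncomputable def trcW (M : DRW S) (c : M.Wr) : ℕ → Option (S ⊕ S) := fun n =>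
  if h : ∃ v, TrcEntry M c n v then some h.choose else none

/-- The reader trace map `trc^r : X_r → (𝒮^∞)^𝒮`: `trc^r(p)(s) = trc^w(c)` where
`p,s → c`. -/
noncomputable def trcR (M : DRW S) (p : M.Rd) (s : S) : ℕ → Option (S ⊕ S) :=
  trcW M (M.rstep p s)

open Classical in
/-- The writer cost map: `cstW M c = some (n,s)` iff `trc^w(c) = (s₁,…,sₙ,s)` is
finite, and `none` (i.e. `*`) iff `trc^w(c)` is infinite. -/
noncomputable def cstW (M : DRW S) (c : M.Wr) : Option (ℕ × S) :=
  if h : ∃ ns : ℕ × S, trcW M c ns.1 = some (.inr ns.2) then some h.choose else none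

/-- The reader cost map. -/
noncomputable def cstR (M : DRW S) (p : M.Rd) (s : S) : Option (ℕ × S) :=
  cstW M (M.rstep p s)

/-- The writer termination map: the last element of a finite trace, `none` (`*`)
for an infinite trace. -/
noncomputable def terW (M : DRW S) (c : M.Wr) : Option S := (cstW M c).map Prod.snd

/-- The reader termination map. -/
noncomputable def terR (M : DRW S) (p : M.Rd) (s : S) : Option S :=
  (cstR M p s).map Prod.snd

end RW

namespace RW

variable {S : Type}

/-- A trace simulation on a deterministic reader–writer transition system. -/
def IsTraceSim (M : DRW S) (Rr : M.Rd → M.Rd → Prop) (Rw : M.Wr → M.Wr → Prop) : Prop :=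
  (∀ p q s c, Rr p q → M.rstep p s = c → ∃ d, M.rstep q s = d ∧ Rw c d) ∧
  (∀ c d c', Rw c d → TauTr M c c' → ∃ d', WSil M d d' ∧ Rw c' d') ∧
  (∀ c d s c', Rw c d → OutTr M c s c' → ∃ d', WOut M d s d' ∧ Rw c' d') ∧
  (∀ c d s, Rw c d → DownTr M c s → WDone M d s)

/-- Two readers are related by the greatest trace simulation (the union of all
trace simulations). -/
def TraceSimR (M : DRW S) (p q : M.Rd) : Prop :=
  ∃ Rr Rw, IsTraceSim M Rr Rw ∧ Rr p q

/-- Two writers are related by the greatest trace simulation. -/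
def TraceSimW (M : DRW S) (c d : M.Wr) : Prop :=
  ∃ Rr Rw, IsTraceSim M Rr Rw ∧ Rw c d

section Aux

variable {M : DRW S}

lemma tau_det {c a b : M.Wr} (h1 : TauTr M c a) (h2 : TauTr M c b) : a = b := by
  unfold TauTr at h1 h2; rw [h1] at h2; exact (Sum.inl.inj (Sum.inr.inj h2))

/-- A node whose `wstep` is not a tau step. -/
def Terminal (M : DRW S) (a : M.Wr) : Prop := ∀ x, ¬ TauTr M a x

lemma outTr_terminal {a : M.Wr} {s e} (h : OutTr M a s e) : Terminal M a := by
  intro x hx; unfold OutTr at h; unfold TauTr at hx; rw [h] at hx; exact nomatch hx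

lemma downTr_terminal {a : M.Wr} {s} (h : DownTr M a s) : Terminal M a := by
  intro x hx; unfold DownTr at h; unfold TauTr at hx
  rw [h] at hx; exact nomatch hx

lemma wsil_confl {c a : M.Wr} (hca : WSil M c a) (hterm : Terminal M a) :
    ∀ b, WSil M c b → WSil M b a := by
  induction hca using Relation.ReflTransGen.head_induction_on with
  | refl =>
      intro b hb
      rcases (Relation.ReflTransGen.cases_head hb) with rfl | ⟨x, hx, _⟩
      · exact Relation.ReflTransGen.refl
      · exact absurd hx (hterm x)
  | head hstep htail ih =>
      rename_i c c₁
      intro b hb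
      rcases (Relation.ReflTransGen.cases_head hb) with rfl | ⟨x, hx, hxb⟩
      · exact Relation.ReflTransGen.head hstep htail
      · cases tau_det hstep hx; exact ih b hxb

lemma wsil_terminal_eq {c a b : M.Wr} (hca : WSil M c a) (ha : Terminal M a)
    (hcb : WSil M c b) (hb : Terminal M b) : a = b := by
  have h := wsil_confl hca ha b hcb
  rcases Relation.ReflTransGen.cases_head h with rfl | ⟨x, hx, _⟩
  · rfl
  · exact absurd hx (hb x)

lemma wout_det {c : M.Wr} {s₁ s₂ d₁ d₂} (h1 : WOut M c s₁ d₁) (h2 : WOut M c s₂ d₂) :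
    s₁ = s₂ ∧ d₁ = d₂ := by
  obtain ⟨e₁, he₁, ho₁⟩ := h1
  obtain ⟨e₂, he₂, ho₂⟩ := h2
  cases wsil_terminal_eq he₁ (outTr_terminal ho₁) he₂ (outTr_terminal ho₂)
  unfold OutTr at ho₁ ho₂; rw [ho₁] at ho₂
  have := Sum.inl.inj ho₂
  exact ⟨congrArg Prod.snd this, congrArg Prod.fst this⟩

lemma wout_wdone_excl {c : M.Wr} {s₁ s₂ d₁} (h1 : WOut M c s₁ d₁) (h2 : WDone M c s₂) :
    False := by
  obtain ⟨e₁, he₁, ho₁⟩ := h1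
  obtain ⟨e₂, he₂, ho₂⟩ := h2
  cases wsil_terminal_eq he₁ (outTr_terminal ho₁) he₂ (downTr_terminal ho₂)
  unfold OutTr at ho₁; unfold DownTr at ho₂; rw [ho₁] at ho₂; exact nomatch ho₂

lemma wdone_det {c : M.Wr} {s₁ s₂} (h1 : WDone M c s₁) (h2 : WDone M c s₂) : s₁ = s₂ := by
  obtain ⟨e₁, he₁, ho₁⟩ := h1
  obtain ⟨e₂, he₂, ho₂⟩ := h2
  cases wsil_terminal_eq he₁ (downTr_terminal ho₁) he₂ (downTr_terminal ho₂)
  unfold DownTr at ho₁ ho₂; rw [ho₁] at ho₂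
  exact Sum.inr.inj (Sum.inr.inj ho₂)

lemma reachL_det {l₁ : List S} : ∀ {c : M.Wr} {l₂ e₁ e₂}, ReachL M c l₁ e₁ →
    ReachL M c l₂ e₂ → l₁.length = l₂.length → l₁ = l₂ ∧ e₁ = e₂ := by
  induction l₁ with
  | nil =>
      intro c l₂ e₁ e₂ h1 h2 hlen
      cases l₂ with
      | nil => exact ⟨rfl, h1 ▸ h2 ▸ rfl⟩
      | cons s l => simp at hlen
  | cons s l ih =>
      intro c l₂ e₁ e₂ h1 h2 hlen
      cases l₂ with
      | nil => simp at hlen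
      | cons s' l' =>
          obtain ⟨c₁, ho₁, hr₁⟩ := h1
          obtain ⟨c₂, ho₂, hr₂⟩ := h2
          obtain ⟨hs, hc⟩ := wout_det ho₁ ho₂
          subst hs; subst hc
          simp only [List.length_cons, Nat.succ.injEq] at hlen
          obtain ⟨hl, he⟩ := ih hr₁ hr₂ hlen
          exact ⟨by rw [hl], he⟩

lemma reachL_len_le {l₀ : List S} : ∀ {c d₀ : M.Wr} {s l e}, ReachL M c l₀ d₀ →
    WDone M d₀ s → ReachL M c l e → l.length ≤ l₀.length := by
  induction l₀ with
  | nil =>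
      intro c d₀ s l e h0 hd hr
      cases h0
      cases l with
      | nil => exact Nat.le_refl _
      | cons s' l' =>
          obtain ⟨c₁, ho, _⟩ := hr
          exact (wout_wdone_excl ho hd).elim
  | cons s₀ l₀' ih =>
      intro c d₀ s l e h0 hd hr
      obtain ⟨c₁, ho₁, hr₁⟩ := h0
      cases l with
      | nil => exact Nat.zero_le _
      | cons s' l' =>
          obtain ⟨c₂, ho₂, hr₂⟩ := hr
          obtain ⟨hs, hc⟩ := wout_det ho₂ ho₁
          subst hs; subst hc
          simpa using ih hr₁ hd hr₂

lemma trcEntry_reach {c : M.Wr} {n v} (h : TrcEntry M c n v) :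
    ∃ l e, ReachL M c l e ∧ l.length = n := by
  rcases h with ⟨l, d, s, d', hr, hlen, _⟩ | ⟨l, d, s, hr, hlen, _⟩
  · exact ⟨l, d, hr, hlen⟩
  · exact ⟨l, d, hr, hlen⟩

lemma entry_unique {c : M.Wr} {n v v'} (h : TrcEntry M c n v) (h' : TrcEntry M c n v') :
    v = v' := by
  rcases h with ⟨l, d, s, d', hr, hlen, ho, rfl⟩ | ⟨l, d, s, hr, hlen, ho, rfl⟩ <;>
    rcases h' with ⟨l', d₂, s₂, d₂', hr', hlen', ho', rfl⟩ | ⟨l', d₂, s₂, hr', hlen', ho', rfl⟩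
  · obtain ⟨_, he⟩ := reachL_det hr hr' (hlen.trans hlen'.symm); subst he
    obtain ⟨hs, _⟩ := wout_det ho ho'; rw [hs]
  · obtain ⟨_, he⟩ := reachL_det hr hr' (hlen.trans hlen'.symm); subst he
    exact (wout_wdone_excl ho ho').elim
  · obtain ⟨_, he⟩ := reachL_det hr hr' (hlen.trans hlen'.symm); subst he
    exact (wout_wdone_excl ho' ho).elim
  · obtain ⟨_, he⟩ := reachL_det hr hr' (hlen.trans hlen'.symm); subst he
    rw [wdone_det ho ho']

lemma trcW_some {c : M.Wr} {n v} : trcW M c n = some v ↔ TrcEntry M c n v := by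
  unfold trcW
  constructor
  · intro h
    by_cases hh : ∃ v, TrcEntry M c n v
    · rw [dif_pos hh] at h; exact Option.some.inj h ▸ hh.choose_spec
    · rw [dif_neg hh] at h; exact nomatch h
  · intro h
    have hh : ∃ v, TrcEntry M c n v := ⟨v, h⟩
    rw [dif_pos hh]
    exact congrArg some (entry_unique hh.choose_spec h)

lemma trcW_none {c : M.Wr} {n} : trcW M c n = none ↔ ¬ ∃ v, TrcEntry M c n v := by
  unfold trcW
  constructor
  · intro h hh
    rw [dif_pos hh] at h; exact nomatch h
  · intro h; rw [dif_neg h]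

lemma trcW_congr {c d : M.Wr} {n m} (H : ∀ v, TrcEntry M c n v ↔ TrcEntry M d m v) :
    trcW M c n = trcW M d m := by
  by_cases h : ∃ v, TrcEntry M c n v
  · obtain ⟨v, hv⟩ := h
    rw [trcW_some.mpr hv, trcW_some.mpr ((H v).mp hv)]
  · rw [trcW_none.mpr h, trcW_none.mpr (fun ⟨v, hv⟩ => h ⟨v, (H v).mpr hv⟩)]

end Aux

section Aux2

variable {M : DRW S}

lemma exists_terminal (nodiv : ¬ ∃ f : ℕ → M.Wr, ∀ n, TauTr M (f n) (f (n + 1)))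
    (c : M.Wr) : ∃ c', WSil M c c' ∧ Terminal M c' := by
  by_contra hcon
  push_neg at hcon
  have hstep : ∀ x : {x : M.Wr // WSil M c x}, ∃ y, TauTr M x.1 y := by
    intro ⟨x, hx⟩
    have := hcon x hx
    unfold Terminal at this
    push_neg at this
    exact this
  let g : {x : M.Wr // WSil M c x} → {x : M.Wr // WSil M c x} := fun x =>
    ⟨(hstep x).choose, x.2.tail (hstep x).choose_spec⟩
  let f : ℕ → {x : M.Wr // WSil M c x} := fun n => g^[n] ⟨c, Relation.ReflTransGen.refl⟩
  refine nodiv ⟨fun n => (f n).1, fun n => ?_⟩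
  have : f (n + 1) = g (f n) := Function.iterate_succ_apply' g n _
  show TauTr M (f n).1 (f (n + 1)).1
  rw [this]
  exact (hstep (f n)).choose_spec

lemma entry_zero (nodiv : ¬ ∃ f : ℕ → M.Wr, ∀ n, TauTr M (f n) (f (n + 1)))
    (c : M.Wr) : ∃ v, TrcEntry M c 0 v := by
  obtain ⟨c', hsil, hterm⟩ := exists_terminal nodiv c
  rcases hw : M.wstep c' with ⟨d, s⟩ | d | s
  · exact ⟨.inl s, Or.inl ⟨[], c, s, d, rfl, rfl, ⟨c', hsil, hw⟩, rfl⟩⟩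
  · exact absurd hw (hterm d)
  · exact ⟨.inr s, Or.inr ⟨[], c, s, rfl, rfl, ⟨c', hsil, hw⟩, rfl⟩⟩

lemma reachL_append {l : List S} : ∀ {c d : M.Wr} {s d'}, ReachL M c l d →
    WOut M d s d' → ReachL M c (l ++ [s]) d' := by
  induction l with
  | nil => intro c d s d' hr ho; cases hr; exact ⟨d', ho, rfl⟩
  | cons s₀ l₀ ih =>
      intro c d s d' hr ho
      obtain ⟨c₁, ho₁, hr₁⟩ := hr
      exact ⟨c₁, ho₁, ih hr₁ ho⟩

/-- If there is no trace entry at position `n`, there is an `inr` entry strictly below. -/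
lemma no_entry_inr (nodiv : ¬ ∃ f : ℕ → M.Wr, ∀ n, TauTr M (f n) (f (n + 1)))
    {c : M.Wr} : ∀ {n : ℕ}, (¬ ∃ v, TrcEntry M c n v) →
    ∃ k s, k < n ∧ TrcEntry M c k (.inr s) := by
  intro n
  induction n with
  | zero => intro h; exact absurd (entry_zero nodiv c) h
  | succ m ih =>
      intro h
      by_cases hm : ∃ v, TrcEntry M c m v
      · obtain ⟨v, hv⟩ := hm
        rcases hv with ⟨l, d, s, d', hr, hlen, ho, rfl⟩ | ⟨l, d, s, hr, hlen, ho, rfl⟩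
        · exfalso
          have hr' : ReachL M c (l ++ [s]) d' := reachL_append hr ho
          have hlen' : (l ++ [s]).length = m + 1 := by simp [hlen]
          obtain ⟨v₀, hv₀⟩ := entry_zero nodiv d'
          rcases hv₀ with ⟨l₀, e, s₀, e', hre, hlen₀, hoe, rfl⟩ |
              ⟨l₀, e, s₀, hre, hlen₀, hoe, rfl⟩
          · rw [List.length_eq_zero_iff] at hlen₀; subst hlen₀; cases hre
            exact h ⟨.inl s₀, Or.inl ⟨l ++ [s], d', s₀, e', hr', hlen', hoe, rfl⟩⟩
          · rw [List.length_eq_zero_iff] at hlen₀; subst hlen₀; cases hre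
            exact h ⟨.inr s₀, Or.inr ⟨l ++ [s], d', s₀, hr', hlen', hoe, rfl⟩⟩
        · exact ⟨m, s, Nat.lt_succ_self m, Or.inr ⟨l, d, s, hr, hlen, ho, rfl⟩⟩
      · obtain ⟨k, s, hk, hks⟩ := ih hm
        exact ⟨k, s, Nat.lt_succ_of_lt hk, hks⟩

/-- An `inr` entry at `k` bounds the positions of all entries. -/
lemma entry_le_of_inr {c : M.Wr} {k s n v} (hk : TrcEntry M c k (.inr s))
    (hn : TrcEntry M c n v) : n ≤ k := by
  rcases hk with ⟨_, _, _, _, _, _, _, heq⟩ | ⟨l₀, d₀, s₀, hr₀, hlen₀, hd₀, _⟩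
  · exact nomatch heq
  · obtain ⟨l, e, hr, hlen⟩ := trcEntry_reach hn
    rw [← hlen, ← hlen₀]
    exact reachL_len_le hr₀ hd₀ hr

/-- Characterization of `TrcEntry` at `0`. -/
lemma entry_zero_iff {c : M.Wr} {v} : TrcEntry M c 0 v ↔
    ((∃ s d', WOut M c s d' ∧ v = .inl s) ∨ (∃ s, WDone M c s ∧ v = .inr s)) := by
  constructor
  · rintro (⟨l, d, s, d', hr, hlen, ho, rfl⟩ | ⟨l, d, s, hr, hlen, ho, rfl⟩) <;>
      rw [List.length_eq_zero_iff] at hlen <;> subst hlen <;> cases hr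
    · exact Or.inl ⟨s, d', ho, rfl⟩
    · exact Or.inr ⟨s, ho, rfl⟩
  · rintro (⟨s, d', ho, rfl⟩ | ⟨s, ho, rfl⟩)
    · exact Or.inl ⟨[], c, s, d', rfl, rfl, ho, rfl⟩
    · exact Or.inr ⟨[], c, s, rfl, rfl, ho, rfl⟩

/-- Characterization of `TrcEntry` at `n+1`. -/
lemma entry_succ_iff {c : M.Wr} {n v} : TrcEntry M c (n + 1) v ↔
    ∃ s c₁, WOut M c s c₁ ∧ TrcEntry M c₁ n v := by
  constructor
  · rintro (⟨l, d, s, d', hr, hlen, ho, rfl⟩ | ⟨l, d, s, hr, hlen, ho, rfl⟩)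
    · cases l with
      | nil => simp at hlen
      | cons s₀ l₀ =>
          obtain ⟨c₁, ho₁, hr₁⟩ := hr
          simp only [List.length_cons, Nat.succ.injEq] at hlen
          exact ⟨s₀, c₁, ho₁, Or.inl ⟨l₀, d, s, d', hr₁, hlen, ho, rfl⟩⟩
    · cases l with
      | nil => simp at hlen
      | cons s₀ l₀ =>
          obtain ⟨c₁, ho₁, hr₁⟩ := hr
          simp only [List.length_cons, Nat.succ.injEq] at hlen
          exact ⟨s₀, c₁, ho₁, Or.inr ⟨l₀, d, s, hr₁, hlen, ho, rfl⟩⟩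
  · rintro ⟨s, c₁, ho, (⟨l, d, s', d', hr, hlen, ho', rfl⟩ | ⟨l, d, s', hr, hlen, ho', rfl⟩)⟩
    · exact Or.inl ⟨s :: l, d, s', d', ⟨c₁, ho, hr⟩, by simp [hlen], ho', rfl⟩
    · exact Or.inr ⟨s :: l, d, s', ⟨c₁, ho, hr⟩, by simp [hlen], ho', rfl⟩

lemma tau_wout {c c' : M.Wr} (h : TauTr M c c') {s e} : WOut M c s e ↔ WOut M c' s e := by
  constructor
  · rintro ⟨x, hsil, hout⟩
    rcases Relation.ReflTransGen.cases_head hsil with rfl | ⟨y, hy, hyx⟩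
    · exact absurd h (outTr_terminal hout c')
    · cases tau_det h hy; exact ⟨x, hyx, hout⟩
  · rintro ⟨x, hsil, hout⟩
    exact ⟨x, Relation.ReflTransGen.head h hsil, hout⟩

lemma tau_wdone {c c' : M.Wr} (h : TauTr M c c') {s} : WDone M c s ↔ WDone M c' s := by
  constructor
  · rintro ⟨x, hsil, hout⟩
    rcases Relation.ReflTransGen.cases_head hsil with rfl | ⟨y, hy, hyx⟩
    · exact absurd h (downTr_terminal hout c')
    · cases tau_det h hy; exact ⟨x, hyx, hout⟩
  · rintro ⟨x, hsil, hout⟩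
    exact ⟨x, Relation.ReflTransGen.head h hsil, hout⟩

lemma tau_entry {c c' : M.Wr} (h : TauTr M c c') {n v} :
    TrcEntry M c n v ↔ TrcEntry M c' n v := by
  cases n with
  | zero =>
      rw [entry_zero_iff, entry_zero_iff]
      constructor
      · rintro (⟨s, d', ho, rfl⟩ | ⟨s, ho, rfl⟩)
        · exact Or.inl ⟨s, d', (tau_wout h).mp ho, rfl⟩
        · exact Or.inr ⟨s, (tau_wdone h).mp ho, rfl⟩
      · rintro (⟨s, d', ho, rfl⟩ | ⟨s, ho, rfl⟩)
        · exact Or.inl ⟨s, d', (tau_wout h).mpr ho, rfl⟩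
        · exact Or.inr ⟨s, (tau_wdone h).mpr ho, rfl⟩
  | succ m =>
      rw [entry_succ_iff, entry_succ_iff]
      constructor
      · rintro ⟨s, c₁, ho, he⟩; exact ⟨s, c₁, (tau_wout h).mp ho, he⟩
      · rintro ⟨s, c₁, ho, he⟩; exact ⟨s, c₁, (tau_wout h).mpr ho, he⟩

lemma shift_entry {c c' : M.Wr} {s} (h : WOut M c s c') {n v} :
    TrcEntry M c (n + 1) v ↔ TrcEntry M c' n v := by
  rw [entry_succ_iff]
  constructor
  · rintro ⟨s', c₁, ho, he⟩
    obtain ⟨hs, hc⟩ := wout_det ho h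
    subst hs; subst hc; exact he
  · intro he; exact ⟨s, c', h, he⟩

end Aux2

section Aux3

variable {M : DRW S} {Rr : M.Rd → M.Rd → Prop} {Rw : M.Wr → M.Wr → Prop}

lemma sim_wsil (hs : IsTraceSim M Rr Rw) {c c' d : M.Wr} (h : WSil M c c') (hr : Rw c d) :
    ∃ d', WSil M d d' ∧ Rw c' d' := by
  induction h with
  | refl => exact ⟨d, Relation.ReflTransGen.refl, hr⟩
  | tail _ hstep ih =>
      obtain ⟨d₁, hd₁, hr₁⟩ := ih
      obtain ⟨d', hd', hr'⟩ := hs.2.1 _ _ _ hr₁ hstep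
      exact ⟨d', hd₁.trans hd', hr'⟩

lemma sim_wout (hs : IsTraceSim M Rr Rw) {c c' d : M.Wr} {s} (h : WOut M c s c')
    (hr : Rw c d) : ∃ d', WOut M d s d' ∧ Rw c' d' := by
  obtain ⟨x, hsil, hout⟩ := h
  obtain ⟨d₁, hd₁, hr₁⟩ := sim_wsil hs hsil hr
  obtain ⟨d', ⟨y, hy, hyo⟩, hr'⟩ := hs.2.2.1 _ _ _ _ hr₁ hout
  exact ⟨d', ⟨y, hd₁.trans hy, hyo⟩, hr'⟩

lemma sim_wdone (hs : IsTraceSim M Rr Rw) {c d : M.Wr} {s} (h : WDone M c s)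
    (hr : Rw c d) : WDone M d s := by
  obtain ⟨x, hsil, hout⟩ := h
  obtain ⟨d₁, hd₁, hr₁⟩ := sim_wsil hs hsil hr
  obtain ⟨y, hy, hyo⟩ := hs.2.2.2 _ _ _ hr₁ hout
  exact ⟨y, hd₁.trans hy, hyo⟩

lemma sim_reach (hs : IsTraceSim M Rr Rw) {l : List S} : ∀ {c e d : M.Wr},
    ReachL M c l e → Rw c d → ∃ e', ReachL M d l e' ∧ Rw e e' := by
  induction l with
  | nil => intro c e d h hr; cases h; exact ⟨d, rfl, hr⟩
  | cons s l ih =>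
      intro c e d h hr
      obtain ⟨c₁, ho, hrest⟩ := h
      obtain ⟨d₁, ho', hr₁⟩ := sim_wout hs ho hr
      obtain ⟨e', hre', hr'⟩ := ih hrest hr₁
      exact ⟨e', ⟨d₁, ho', hre'⟩, hr'⟩

lemma sim_entry (hs : IsTraceSim M Rr Rw) {c d : M.Wr} {n v} (h : TrcEntry M c n v)
    (hr : Rw c d) : TrcEntry M d n v := by
  rcases h with ⟨l, e, s, e', hre, hlen, ho, rfl⟩ | ⟨l, e, s, hre, hlen, ho, rfl⟩
  · obtain ⟨f, hrf, hrf'⟩ := sim_reach hs hre hr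
    obtain ⟨f', ho', _⟩ := sim_wout hs ho hrf'
    exact Or.inl ⟨l, f, s, f', hrf, hlen, ho', rfl⟩
  · obtain ⟨f, hrf, hrf'⟩ := sim_reach hs hre hr
    exact Or.inr ⟨l, f, s, hrf, hlen, sim_wdone hs ho hrf', rfl⟩

lemma sim_trcW (nodiv : ¬ ∃ f : ℕ → M.Wr, ∀ n, TauTr M (f n) (f (n + 1)))
    (hs : IsTraceSim M Rr Rw) {c d : M.Wr} (hr : Rw c d) : trcW M c = trcW M d := by
  funext n
  by_cases h : ∃ v, TrcEntry M c n v
  · obtain ⟨v, hv⟩ := h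
    rw [trcW_some.mpr hv, trcW_some.mpr (sim_entry hs hv hr)]
  · obtain ⟨k, s, hkn, hks⟩ := no_entry_inr nodiv h
    have hdk : TrcEntry M d k (.inr s) := sim_entry hs hks hr
    rw [trcW_none.mpr h, trcW_none.mpr ?_]
    rintro ⟨v, hv⟩
    exact absurd (entry_le_of_inr hdk hv) (Nat.not_le.mpr hkn)

/-- Trace equality is a trace simulation. -/
lemma trc_eq_sim (M : DRW S) : IsTraceSim M
    (fun p q => trcR M p = trcR M q) (fun c d => trcW M c = trcW M d) := by
  refine ⟨?_, ?_, ?_, ?_⟩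
  · intro p q s c hpq hc
    refine ⟨M.rstep q s, rfl, ?_⟩
    show trcW M c = trcW M (M.rstep q s)
    rw [← hc]
    exact congrFun hpq s
  · intro c d c' hcd htau
    refine ⟨d, Relation.ReflTransGen.refl, ?_⟩
    show trcW M c' = trcW M d
    rw [← hcd]
    funext n
    exact trcW_congr (fun v => (tau_entry htau).symm)
  · intro c d s c' hcd hout
    have hwout : WOut M c s c' := ⟨c, Relation.ReflTransGen.refl, hout⟩
    have h0 : TrcEntry M c 0 (.inl s) := entry_zero_iff.mpr (Or.inl ⟨s, c', hwout, rfl⟩)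
    have hd0 : TrcEntry M d 0 (.inl s) := by
      have := trcW_some.mpr h0
      rw [hcd] at this
      exact trcW_some.mp this
    obtain ⟨s', d', hdo, heq⟩ | ⟨s', _, heq⟩ := entry_zero_iff.mp hd0
    · cases Sum.inl.inj heq
      refine ⟨d', hdo, ?_⟩
      show trcW M c' = trcW M d'
      funext n
      calc trcW M c' n = trcW M c (n + 1) := trcW_congr (fun v => (shift_entry hwout).symm)
        _ = trcW M d (n + 1) := congrFun hcd (n + 1)
        _ = trcW M d' n := trcW_congr (fun v => shift_entry hdo)
    · exact nomatch heq
  · intro c d s hcd hdown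
    have h0 : TrcEntry M c 0 (.inr s) :=
      entry_zero_iff.mpr (Or.inr ⟨s, ⟨c, Relation.ReflTransGen.refl, hdown⟩, rfl⟩)
    have hd0 : TrcEntry M d 0 (.inr s) := by
      have := trcW_some.mpr h0
      rw [hcd] at this
      exact trcW_some.mp this
    obtain ⟨_, _, _, heq⟩ | ⟨s', hdw, heq⟩ := entry_zero_iff.mp hd0
    · exact nomatch heq
    · cases Sum.inr.inj heq; exact hdw

end Aux3

/-- in a deterministic reader–writer transition system with no
infinite chain of consecutive silent writer transitions, trace similarity coincides
with trace equivalence, both on readers and on writers. -/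
theorem trace_similarity_eq_trace_equivalence (M : DRW S)
    (nodiv : ¬ ∃ f : ℕ → M.Wr, ∀ n, TauTr M (f n) (f (n + 1))) :
    (∀ p q : M.Rd, TraceSimR M p q ↔ trcR M p = trcR M q) ∧
    (∀ c d : M.Wr, TraceSimW M c d ↔ trcW M c = trcW M d) := by

  constructor
  · intro p q
    constructor
    · rintro ⟨Rr, Rw, hs, hpq⟩
      funext s
      obtain ⟨d, hd, hrw⟩ := hs.1 p q s (M.rstep p s) hpq rfl
      show trcW M (M.rstep p s) = trcW M (M.rstep q s)
      rw [hd]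
      exact sim_trcW nodiv hs hrw
    · intro h
      exact ⟨_, _, trc_eq_sim M, h⟩
  · intro c d
    constructor
    · rintro ⟨Rr, Rw, hs, hcd⟩
      exact sim_trcW nodiv hs hcd
    · intro h
      exact ⟨_, _, trc_eq_sim M, h⟩


end RW
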